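/- (Minimal wave speed on the square lattice.) The function β ↦ c_s*(β) satisfies c_s*(β + π/2) = c_s*(β) for all β ∈ ℝ, is strictly decreasing on [0, π/4], and is strictly increasing on [π/4, π/2]: if 0 ≤ β₁ < β₂ ≤ π/4 then c_s*(β₂) < c_s*(β₁), and if π/4 ≤ β₁ < β₂ ≤ π/2 then c_s*(β₁) < c_s*(β₂). -/

import Mathlib

open Real
open Set

/-- The minimal wave speed on the two-dimensional square lattice, in direction β,
with `a` playing the role of f'(0). -/
noncomputable def csSq (a β : ℝ) : ℝ :=
  sInf {c : ℝ | ∃ ν : ℝ, 0 < ν ∧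
    c = (Real.exp (ν * Real.cos β) + Real.exp (-(ν * Real.cos β))
      + Real.exp (ν * Real.sin β) + Real.exp (-(ν * Real.sin β)) - 4 + a) / ν}

noncomputable def phiS (a β ν : ℝ) : ℝ :=
  (Real.exp (ν * Real.cos β) + Real.exp (-(ν * Real.cos β))
      + Real.exp (ν * Real.sin β) + Real.exp (-(ν * Real.sin β)) - 4 + a) / ν

/-- sinh t < t cosh t for t > 0 -/
lemma sinh_lt_mul_cosh {t : ℝ} (ht : 0 < t) : Real.sinh t < t * Real.cosh t := by
  have h : StrictMonoOn (fun s : ℝ => s * Real.cosh s - Real.sinh s) (Ici 0) := by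
    apply strictMonoOn_of_deriv_pos (convex_Ici 0)
    · fun_prop
    · intro s hs
      rw [interior_Ici, mem_Ioi] at hs
      have h1 : HasDerivAt (fun s : ℝ => s * Real.cosh s - Real.sinh s)
          (1 * Real.cosh s + s * Real.sinh s - Real.cosh s) s :=
        ((hasDerivAt_id s).mul (Real.hasDerivAt_cosh s)).sub (Real.hasDerivAt_sinh s)
      rw [h1.deriv]
      have := Real.sinh_pos_iff.mpr hs
      nlinarith
  have := h (self_mem_Ici) (le_of_lt ht : (0:ℝ) ≤ t) ht
  simp at this
  linarith

/-- for 0 < y < x : x sinh y < y sinh x -/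
lemma mul_sinh_lt {x y : ℝ} (hy : 0 < y) (hxy : y < x) :
    x * Real.sinh y < y * Real.sinh x := by
  have h : StrictMonoOn (fun t : ℝ => y * Real.sinh t - t * Real.sinh y) (Ici y) := by
    apply strictMonoOn_of_deriv_pos (convex_Ici y)
    · fun_prop
    · intro t ht
      rw [interior_Ici, mem_Ioi] at ht
      have h1 : HasDerivAt (fun t : ℝ => y * Real.sinh t - t * Real.sinh y)
          (y * Real.cosh t - 1 * Real.sinh y) t :=
        ((hasDerivAt_const t y).mul (Real.hasDerivAt_sinh t)).sub
          ((hasDerivAt_id t).mul (hasDerivAt_const t _)) |>.congr_deriv (by ring)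
      rw [h1.deriv]
      have h2 : Real.sinh y < y * Real.cosh y := sinh_lt_mul_cosh hy
      have h3 : Real.cosh y < Real.cosh t := by
        rw [Real.cosh_lt_cosh]
        rw [abs_of_pos hy, abs_of_pos (hy.trans ht)]
        exact ht
      nlinarith [Real.cosh_pos y]
  have := h (self_mem_Ici) (le_of_lt hxy : y ≤ x) hxy
  simp at this
  linarith

/-- 2 + x² ≤ exp x + exp (−x) -/
lemma two_add_sq_le_exp (x : ℝ) : 2 + x ^ 2 ≤ Real.exp x + Real.exp (-x) := by
  have key : ∀ y : ℝ, 0 ≤ y → 2 + y ^ 2 ≤ Real.exp y + Real.exp (-y) := by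
    intro y hy
    have h1 : y / 2 ≤ Real.sinh (y / 2) := by
      rcases eq_or_lt_of_le hy with h | h
      · simp [← h]
      · exact le_of_lt (Real.self_lt_sinh_iff.mpr (by linarith))
    have h2 : Real.sinh (y/2) = (Real.exp (y/2) - Real.exp (-(y/2))) / 2 := Real.sinh_eq _
    have h3 : Real.exp (y/2) * Real.exp (-(y/2)) = 1 := by
      rw [← Real.exp_add]; simp
    have h4 : Real.exp (y/2) * Real.exp (y/2) = Real.exp y := by
      rw [← Real.exp_add]; ring_nf
    have h5 : Real.exp (-(y/2)) * Real.exp (-(y/2)) = Real.exp (-y) := by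
      rw [← Real.exp_add]; ring_nf
    nlinarith [Real.exp_pos (y/2), Real.exp_pos (-(y/2))]
  rcases le_or_gt 0 x with h | h
  · exact key x h
  · have := key (-x) (by linarith)
    rw [neg_neg] at this
    nlinarith

lemma phiS_ge_a_div {a β ν : ℝ} (hν : 0 < ν) : a / ν ≤ phiS a β ν := by
  unfold phiS
  gcongr
  nlinarith [Real.add_one_le_exp (ν * Real.cos β), Real.add_one_le_exp (-(ν * Real.cos β)),
    Real.add_one_le_exp (ν * Real.sin β), Real.add_one_le_exp (-(ν * Real.sin β))]

lemma phiS_ge_nu {a β ν : ℝ} (hν : 0 < ν) (ha : 0 ≤ a) : ν ≤ phiS a β ν := by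
  unfold phiS
  rw [le_div_iff₀ hν]
  have h1 := two_add_sq_le_exp (ν * Real.cos β)
  have h2 := two_add_sq_le_exp (ν * Real.sin β)
  have h3 : Real.sin β ^ 2 + Real.cos β ^ 2 = 1 := Real.sin_sq_add_cos_sq β
  nlinarith

lemma phiS_pos {a β ν : ℝ} (hν : 0 < ν) (ha : 0 < a) : 0 < phiS a β ν :=
  lt_of_lt_of_le (by positivity) (phiS_ge_a_div hν)


/-- the set defining csSq as an image -/
lemma csSq_eq (a β : ℝ) : csSq a β = sInf (phiS a β '' Ioi 0) := by
  unfold csSq phiS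
  congr 1
  ext c
  constructor
  · rintro ⟨ν, hν, rfl⟩; exact ⟨ν, hν, rfl⟩
  · rintro ⟨ν, hν, rfl⟩; exact ⟨ν, hν, rfl⟩

lemma bddBelow_phiS (a β : ℝ) (ha : 0 < a) : BddBelow (phiS a β '' Ioi 0) := by
  refine ⟨0, ?_⟩
  rintro c ⟨ν, hν, rfl⟩
  exact (phiS_pos hν ha).le

lemma continuousOn_phiS (a β : ℝ) :
    ContinuousOn (phiS a β) (Ioi 0) := by
  unfold phiS
  apply ContinuousOn.div (by fun_prop) continuousOn_id
  intro ν hν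
  exact ne_of_gt hν

/-- the infimum is attained -/
lemma exists_min (a β : ℝ) (ha : 0 < a) :
    ∃ ν : ℝ, 0 < ν ∧ csSq a β = phiS a β ν ∧ ∀ μ : ℝ, 0 < μ → phiS a β ν ≤ phiS a β μ := by
  set M := phiS a β 1 with hM
  have hM0 : 0 < M := phiS_pos one_pos ha
  set ε := a / (M + 1) with hε
  have hε0 : 0 < ε := by positivity
  have hεle : ε ≤ 1 := by
    rw [hε, div_le_one (by linarith)]
    have := phiS_ge_a_div (a := a) (β := β) one_pos
    simp at this
    linarith
  have hle1 : (1:ℝ) ≤ M + 1 := by linarith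
  have hK : IsCompact (Icc ε (M + 1)) := isCompact_Icc
  have hKsub : Icc ε (M + 1) ⊆ Ioi 0 := fun x hx => lt_of_lt_of_le hε0 hx.1
  obtain ⟨ν, hνK, hνmin⟩ := hK.exists_isMinOn ⟨1, hεle, hle1⟩
    ((continuousOn_phiS a β).mono hKsub)
  have hν0 : 0 < ν := hKsub hνK
  have hνM : phiS a β ν ≤ M := hνmin ⟨hεle, hle1⟩
  have key : ∀ μ : ℝ, 0 < μ → phiS a β ν ≤ phiS a β μ := by
    intro μ hμ
    rcases lt_or_ge μ ε with h | h
    · have h1 : a / μ ≤ phiS a β μ := phiS_ge_a_div hμ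
      have h2 : M + 1 < a / μ := by
        rw [lt_div_iff₀ hμ]
        calc (M + 1) * μ < (M + 1) * ε := by
              apply mul_lt_mul_of_pos_left h (by linarith)
          _ = a := by rw [hε]; field_simp
      linarith
    rcases le_or_gt μ (M + 1) with h' | h'
    · exact hνmin ⟨h, h'⟩
    · have h1 : μ ≤ phiS a β μ := phiS_ge_nu hμ ha.le
      linarith
  refine ⟨ν, hν0, ?_, key⟩
  rw [csSq_eq]
  apply le_antisymm
  · exact csInf_le (bddBelow_phiS a β ha) ⟨ν, hν0, rfl⟩
  · refine le_csInf ⟨phiS a β 1, ⟨1, mem_Ioi.mpr one_pos, rfl⟩⟩ ?_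
    rintro c ⟨μ, hμ, rfl⟩
    exact key μ hμ

lemma csSq_le (a β : ℝ) (ha : 0 < a) {ν : ℝ} (hν : 0 < ν) : csSq a β ≤ phiS a β ν := by
  rw [csSq_eq]
  exact csInf_le (bddBelow_phiS a β ha) ⟨ν, hν, rfl⟩

/-- derivative of the numerator in β -/
lemma hasDerivAt_num (ν β : ℝ) :
    HasDerivAt (fun b : ℝ => Real.exp (ν * Real.cos b) + Real.exp (-(ν * Real.cos b))
      + Real.exp (ν * Real.sin b) + Real.exp (-(ν * Real.sin b)))
      (2 * ν * (Real.cos β * Real.sinh (ν * Real.sin β)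
        - Real.sin β * Real.sinh (ν * Real.cos β))) β := by
  have hc : HasDerivAt (fun b : ℝ => ν * Real.cos b) (ν * (-Real.sin β)) β :=
    (Real.hasDerivAt_cos β).const_mul ν
  have hs : HasDerivAt (fun b : ℝ => ν * Real.sin b) (ν * Real.cos β) β :=
    (Real.hasDerivAt_sin β).const_mul ν
  have h1 := hc.exp
  have h2 := hc.neg.exp
  have h3 := hs.exp
  have h4 := hs.neg.exp
  have := ((h1.add h2).add h3).add h4
  refine this.congr_deriv ?_
  simp only [Pi.neg_apply]
  rw [Real.sinh_eq, Real.sinh_eq]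
  ring

lemma num_strictAntiOn {ν : ℝ} (hν : 0 < ν) :
    StrictAntiOn (fun b : ℝ => Real.exp (ν * Real.cos b) + Real.exp (-(ν * Real.cos b))
      + Real.exp (ν * Real.sin b) + Real.exp (-(ν * Real.sin b))) (Icc 0 (π/4)) := by
  apply strictAntiOn_of_deriv_neg (convex_Icc 0 (π/4)) (by fun_prop)
  intro b hb
  rw [interior_Icc, mem_Ioo] at hb
  rw [(hasDerivAt_num ν b).deriv]
  have hπ := Real.pi_pos
  have hs0 : 0 < Real.sin b := Real.sin_pos_of_pos_of_lt_pi hb.1 (by linarith)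
  have hsc : Real.sin b < Real.cos b := by
    calc Real.sin b < Real.sin (π/4) :=
          Real.sin_lt_sin_of_lt_of_le_pi_div_two (by linarith) (by linarith) hb.2
      _ = Real.cos (π/4) := by rw [Real.sin_pi_div_four, Real.cos_pi_div_four]
      _ < Real.cos b := Real.cos_lt_cos_of_nonneg_of_le_pi hb.1.le (by linarith) hb.2
  have key : (ν * Real.cos b) * Real.sinh (ν * Real.sin b)
      < (ν * Real.sin b) * Real.sinh (ν * Real.cos b) :=
    mul_sinh_lt (by positivity) (by nlinarith)
  nlinarith

lemma num_strictMonoOn {ν : ℝ} (hν : 0 < ν) :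
    StrictMonoOn (fun b : ℝ => Real.exp (ν * Real.cos b) + Real.exp (-(ν * Real.cos b))
      + Real.exp (ν * Real.sin b) + Real.exp (-(ν * Real.sin b))) (Icc (π/4) (π/2)) := by
  apply strictMonoOn_of_deriv_pos (convex_Icc _ _) (by fun_prop)
  intro b hb
  rw [interior_Icc, mem_Ioo] at hb
  rw [(hasDerivAt_num ν b).deriv]
  have hπ := Real.pi_pos
  have hc0 : 0 < Real.cos b := Real.cos_pos_of_mem_Ioo ⟨by linarith, hb.2⟩
  have hsc : Real.cos b < Real.sin b := by
    calc Real.cos b < Real.cos (π/4) :=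
          Real.cos_lt_cos_of_nonneg_of_le_pi (by linarith) (by linarith) hb.1
      _ = Real.sin (π/4) := by rw [Real.sin_pi_div_four, Real.cos_pi_div_four]
      _ < Real.sin b := Real.sin_lt_sin_of_lt_of_le_pi_div_two (by linarith) hb.2.le hb.1
  have key : (ν * Real.sin b) * Real.sinh (ν * Real.cos b)
      < (ν * Real.cos b) * Real.sinh (ν * Real.sin b) :=
    mul_sinh_lt (by positivity) (by nlinarith)
  nlinarith

lemma phiS_lt_of_num_lt {a β₁ β₂ ν : ℝ} (hν : 0 < ν)
    (h : Real.exp (ν * Real.cos β₂) + Real.exp (-(ν * Real.cos β₂))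
      + Real.exp (ν * Real.sin β₂) + Real.exp (-(ν * Real.sin β₂))
      < Real.exp (ν * Real.cos β₁) + Real.exp (-(ν * Real.cos β₁))
      + Real.exp (ν * Real.sin β₁) + Real.exp (-(ν * Real.sin β₁))) :
    phiS a β₂ ν < phiS a β₁ ν := by
  unfold phiS
  rw [div_lt_div_iff₀ hν hν]
  nlinarith

theorem stmt19 (a : ℝ) (ha : 0 < a) :
    (∀ β : ℝ, csSq a (β + Real.pi/2) = csSq a β) ∧
    (∀ β₁ β₂ : ℝ, 0 ≤ β₁ → β₁ < β₂ → β₂ ≤ Real.pi/4 → csSq a β₂ < csSq a β₁) ∧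
    (∀ β₁ β₂ : ℝ, Real.pi/4 ≤ β₁ → β₁ < β₂ → β₂ ≤ Real.pi/2 → csSq a β₁ < csSq a β₂) := by
  refine ⟨?_, ?_, ?_⟩
  · intro β
    rw [csSq_eq, csSq_eq]
    apply congrArg
    apply image_congr
    intro ν _
    unfold phiS
    rw [Real.cos_add_pi_div_two, Real.sin_add_pi_div_two, mul_neg, neg_neg]
    ring
  · intro β₁ β₂ h0 h12 h24
    have hπ := Real.pi_pos
    obtain ⟨ν, hν, heq, -⟩ := exists_min a β₁ ha
    have hmem₁ : β₁ ∈ Icc (0:ℝ) (π/4) := ⟨h0, by linarith⟩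
    have hmem₂ : β₂ ∈ Icc (0:ℝ) (π/4) := ⟨by linarith, h24⟩
    have hlt : phiS a β₂ ν < phiS a β₁ ν :=
      phiS_lt_of_num_lt hν (num_strictAntiOn hν hmem₁ hmem₂ h12)
    calc csSq a β₂ ≤ phiS a β₂ ν := csSq_le a β₂ ha hν
      _ < phiS a β₁ ν := hlt
      _ = csSq a β₁ := heq.symm
  · intro β₁ β₂ h41 h12 h22
    have hπ := Real.pi_pos
    obtain ⟨ν, hν, heq, -⟩ := exists_min a β₂ ha
    have hmem₁ : β₁ ∈ Icc (π/4) (π/2) := ⟨h41, by linarith⟩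
    have hmem₂ : β₂ ∈ Icc (π/4) (π/2) := ⟨by linarith, h22⟩
    have hlt : phiS a β₁ ν < phiS a β₂ ν :=
      phiS_lt_of_num_lt hν (num_strictMonoOn hν hmem₁ hmem₂ h12)
    calc csSq a β₁ ≤ phiS a β₁ ν := csSq_le a β₁ ha hν
      _ < phiS a β₂ ν := hlt
      _ = csSq a β₂ := heq.symm
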